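/- Let K^{ij}_s = Σ_k |G^s(i,j,k)⟩⟨G^s(i,j,k)| be the rank-2 projectors on (ℂ²)^{⊗3} and T^{ij} = |i⟩⟨i| ⊗ |j_⊢⟩⟨j_⊢| ⊗ I the product-basis test projectors, where |j_⊢⟩ = (|0⟩ + (−1)^j |1⟩)/√2. Then the measurement overlap c = max_{(i,j),(i',j')} ‖√(K^{i'j'}_s) √(T^{ij})‖_∞² equals 1/4. -/

import Mathlib

open Matrix
open scoped BigOperators ComplexOrder

noncomputable section

open Classical in

/-- Square root of a positive semidefinite matrix (junk value `0` otherwise). -/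
noncomputable def matSqrt {n : Type*} [Fintype n] [DecidableEq n] (A : Matrix n n ℂ) :
    Matrix n n ℂ :=
  if h : A.PosSemidef then
    h.1.eigenvectorUnitary.1 * diagonal ((↑) ∘ (√·) ∘ h.1.eigenvalues) *
      (star h.1.eigenvectorUnitary : Matrix n n ℂ)
  else 0

/-- The operator (spectral) norm `‖·‖_∞` of a matrix. -/
noncomputable def specNorm {n : Type*} [Fintype n] [DecidableEq n] (A : Matrix n n ℂ) : ℝ :=
  ‖Matrix.toEuclideanCLM (𝕜 := ℂ) A‖

/-- `|G^s(i,j,k)⟩ = (1/√2) Σ_l (−1)^{l·(j⊕s)} |l, i⊕l, k⊕l⟩`. -/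
def GsFun (s i j k : Fin 2) : Fin 2 × Fin 2 × Fin 2 → ℂ := fun p =>
  ∑ l : Fin 2, ((1 / (Real.sqrt 2 : ℂ)) * (-1 : ℂ) ^ ((l : ℕ) * ((j + s : Fin 2) : ℕ))) *
    (if p = (l, i + l, k + l) then 1 else 0)

/-- The rank-2 projector `K^{ij}_s = Σ_k |G^s(i,j,k)⟩⟨G^s(i,j,k)|`. -/
noncomputable def Kproj (s i j : Fin 2) : Matrix (Fin 2 × Fin 2 × Fin 2) (Fin 2 × Fin 2 × Fin 2) ℂ :=
  Matrix.of fun p q => ∑ k : Fin 2, GsFun s i j k p * star (GsFun s i j k q)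

/-- The test projector `T^{ij} = |i⟩⟨i| ⊗ |j_⊢⟩⟨j_⊢| ⊗ I`. -/
noncomputable def Tproj (i j : Fin 2) : Matrix (Fin 2 × Fin 2 × Fin 2) (Fin 2 × Fin 2 × Fin 2) ℂ :=
  Matrix.of fun p q =>
    (if p.1 = i then 1 else 0) * (if q.1 = i then 1 else 0) *
      ((1 / 2 : ℂ) * (-1 : ℂ) ^ (((p.2.1 : ℕ) + (q.2.1 : ℕ)) * (j : ℕ))) *
      (if p.2.2 = q.2.2 then 1 else 0)

/-! ### Auxiliary machinery -/

/-- Row matrix whose rows are the (conjugated) vectors `G^s(i,j,k)`. -/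
def Amat (s i j : Fin 2) : Matrix (Fin 2) (Fin 2 × Fin 2 × Fin 2) ℂ :=
  Matrix.of fun k p => star (GsFun s i j k p)

/-- Row matrix whose rows span the range of `Tproj`. -/
def Bmat (i j : Fin 2) : Matrix (Fin 2) (Fin 2 × Fin 2 × Fin 2) ℂ :=
  Matrix.of fun m p =>
    if p.1 = i ∧ p.2.2 = m then (1 / (Real.sqrt 2 : ℂ)) * (-1 : ℂ) ^ ((p.2.1 : ℕ) * (j : ℕ))
    else 0

/-- Closed form of `Amat * Bmatᴴ`. -/
def Mmat (s i j i' j' : Fin 2) : Matrix (Fin 2) (Fin 2) ℂ :=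
  Matrix.of fun k m =>
    (2⁻¹ : ℂ) * (-1 : ℂ) ^ ((i : ℕ) * ((j' + s : Fin 2) : ℕ) + ((i' + i : Fin 2) : ℕ) * (j : ℕ)) *
      (if m = k + i then 1 else 0)

set_option maxHeartbeats 1600000 in
lemma sq2 : ((Real.sqrt 2 : ℝ) : ℂ)⁻¹ * ((Real.sqrt 2 : ℝ) : ℂ)⁻¹ = 2⁻¹ := by
  rw [← mul_inv]; norm_cast; rw [Real.mul_self_sqrt (by norm_num [(show ((2:Fin 2):ℕ) = 0 from rfl)])]; norm_num

set_option maxHeartbeats 1600000 in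
lemma Keq (s i j : Fin 2) : Kproj s i j = (Amat s i j)ᴴ * Amat s i j := by
  ext p q
  simp [Kproj, Amat, Matrix.mul_apply, Matrix.conjTranspose_apply, star_star]

set_option maxHeartbeats 1600000 in
lemma AAh (s i j : Fin 2) : Amat s i j * (Amat s i j)ᴴ = 1 := by
  fin_cases s <;> fin_cases i <;> fin_cases j <;>
    (ext k m <;> fin_cases k <;> fin_cases m <;>
      simp (config := { decide := true }) only [Amat, GsFun, Matrix.mul_apply,
        Matrix.conjTranspose_apply, Matrix.of_apply, Fintype.sum_prod_type, Fin.sum_univ_two,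
        star_sum, star_mul', Matrix.one_apply, map_neg, Complex.conj_ofReal, star_star,
        if_true, if_false, ite_true, ite_false, pow_zero, pow_one, mul_one, one_mul,
        mul_zero, zero_mul, add_zero, zero_add, neg_neg, mul_neg, neg_mul, one_div,
        star_inv₀ ] <;>
      norm_num [sq2, (show ((2:Fin 2):ℕ) = 0 from rfl), (show ((1 + 1 : Fin 2) : ℕ) = 0 from rfl)])

set_option maxHeartbeats 1600000 in
lemma Teq (i j : Fin 2) : Tproj i j = (Bmat i j)ᴴ * Bmat i j := by
  fin_cases i <;> fin_cases j <;>
    (ext p q <;> fin_cases p <;> fin_cases q <;>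
      simp (config := { decide := true }) only [Tproj, Bmat, Matrix.mul_apply,
        Matrix.conjTranspose_apply, Matrix.of_apply, Fin.sum_univ_two,
        star_mul', Matrix.one_apply, map_neg, Complex.conj_ofReal, star_star,
        if_true, if_false, ite_true, ite_false, pow_zero, pow_one, mul_one, one_mul,
        mul_zero, zero_mul, add_zero, zero_add, neg_neg, mul_neg, neg_mul, one_div,
        star_inv₀, star_zero, star_one ] <;>
      norm_num [sq2, (show ((2:Fin 2):ℕ) = 0 from rfl), (show ((1 + 1 : Fin 2) : ℕ) = 0 from rfl)])

set_option maxHeartbeats 1600000 in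
lemma BBh (i j : Fin 2) : Bmat i j * (Bmat i j)ᴴ = 1 := by
  fin_cases i <;> fin_cases j <;>
    (ext k m <;> fin_cases k <;> fin_cases m <;>
      simp (config := { decide := true }) only [Bmat, Matrix.mul_apply,
        Matrix.conjTranspose_apply, Matrix.of_apply, Fintype.sum_prod_type, Fin.sum_univ_two,
        star_mul', Matrix.one_apply, map_neg, Complex.conj_ofReal, star_star,
        if_true, if_false, ite_true, ite_false, pow_zero, pow_one, mul_one, one_mul,
        mul_zero, zero_mul, add_zero, zero_add, neg_neg, mul_neg, neg_mul, one_div,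
        star_inv₀, star_zero, star_one ] <;>
      norm_num [sq2, (show ((2:Fin 2):ℕ) = 0 from rfl), (show ((1 + 1 : Fin 2) : ℕ) = 0 from rfl)])

set_option maxHeartbeats 1600000 in
lemma Meq (s i j i' j' : Fin 2) :
    Amat s i' j' * (Bmat i j)ᴴ = Mmat s i j i' j' := by
  fin_cases s <;> fin_cases i <;> fin_cases j <;> fin_cases i' <;> fin_cases j' <;>
    (ext k m <;> fin_cases k <;> fin_cases m <;>
      simp (config := { decide := true }) only [Amat, Bmat, Mmat, GsFun, Matrix.mul_apply,
        Matrix.conjTranspose_apply, Matrix.of_apply, Fintype.sum_prod_type, Fin.sum_univ_two,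
        star_sum, star_mul', map_neg, Complex.conj_ofReal, star_star,
        if_true, if_false, ite_true, ite_false, pow_zero, pow_one, mul_one, one_mul,
        mul_zero, zero_mul, add_zero, zero_add, neg_neg, mul_neg, neg_mul, one_div,
        star_inv₀, star_zero, star_one ] <;>
      norm_num [sq2, (show ((2:Fin 2):ℕ) = 0 from rfl), (show ((1 + 1 : Fin 2) : ℕ) = 0 from rfl)])

set_option maxHeartbeats 1600000 in
lemma gram (s i j i' j' : Fin 2) :
    (Mmat s i j i' j')ᴴ * Mmat s i j i' j' = (4⁻¹ : ℂ) • 1 := by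
  fin_cases s <;> fin_cases i <;> fin_cases j <;> fin_cases i' <;> fin_cases j' <;>
    (ext k m <;> fin_cases k <;> fin_cases m <;>
      simp (config := { decide := true }) only [Mmat, Matrix.mul_apply,
        Matrix.conjTranspose_apply, Matrix.of_apply, Fin.sum_univ_two,
        star_mul', Matrix.one_apply, Matrix.smul_apply, map_neg, Complex.conj_ofReal,
        if_true, if_false, ite_true, ite_false, pow_zero, pow_one, mul_one, one_mul,
        mul_zero, zero_mul, add_zero, zero_add, neg_neg, mul_neg, neg_mul,
        smul_eq_mul, star_zero, star_one, star_inv₀ ] <;>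
      norm_num [(show ((2:Fin 2):ℕ) = 0 from rfl), (show ((1 + 1 : Fin 2) : ℕ) = 0 from rfl)])

lemma matSqrt_proj {N : Type*} [Fintype N] [DecidableEq N] {A : Matrix N N ℂ}
    (h1 : Aᴴ = A) (h2 : A * A = A) : matSqrt A = A := by
  have hA : A.PosSemidef := by
    have := Matrix.posSemidef_conjTranspose_mul_self A
    rwa [h1, h2] at this
  rw [matSqrt, dif_pos hA]
  have hsub : spectrum ℝ A ⊆ {0, 1} :=
    (isIdempotentElem_iff_spectrum_subset ℝ A hA.1.isSelfAdjoint).1 h2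
  have hd : diagonal ((↑) ∘ (√·) ∘ hA.1.eigenvalues) =
      diagonal (RCLike.ofReal ∘ hA.1.eigenvalues : N → ℂ) := by
    congr 1; funext i
    have hi := hsub (hA.1.eigenvalues_mem_spectrum_real i)
    rcases hi with hi | hi <;> simp_all
  rw [hd]
  conv_rhs => rw [hA.1.spectral_theorem]
  rw [Unitary.conjStarAlgAut_apply]

set_option maxHeartbeats 1600000 in
set_option synthInstance.maxHeartbeats 400000 in
lemma key (s i j i' j' : Fin 2) :
    (specNorm (matSqrt (Kproj s i' j') * matSqrt (Tproj i j))) ^ 2 = 1 / 4 := by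
  set K := Kproj s i' j' with hK
  set T := Tproj i j with hT
  have hKh : Kᴴ = K := by
    rw [hK, Keq]; simp [Matrix.conjTranspose_mul, Matrix.mul_assoc]
  have hTh : Tᴴ = T := by
    rw [hT, Teq]; simp [Matrix.conjTranspose_mul, Matrix.mul_assoc]
  have hKi : K * K = K := by
    rw [hK, Keq]
    calc (Amat s i' j')ᴴ * Amat s i' j' * ((Amat s i' j')ᴴ * Amat s i' j')
        = (Amat s i' j')ᴴ * ((Amat s i' j' * (Amat s i' j')ᴴ) * Amat s i' j') := by
          simp only [Matrix.mul_assoc]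
      _ = (Amat s i' j')ᴴ * Amat s i' j' := by rw [AAh, Matrix.one_mul]
  have hTi : T * T = T := by
    rw [hT, Teq]
    calc (Bmat i j)ᴴ * Bmat i j * ((Bmat i j)ᴴ * Bmat i j)
        = (Bmat i j)ᴴ * ((Bmat i j * (Bmat i j)ᴴ) * Bmat i j) := by
          simp only [Matrix.mul_assoc]
      _ = (Bmat i j)ᴴ * Bmat i j := by rw [BBh, Matrix.one_mul]
  have hTKT : T * (K * T) = (4⁻¹ : ℂ) • T := by
    rw [hT, hK, Teq, Keq]
    have hBA : Bmat i j * (Amat s i' j')ᴴ = (Mmat s i j i' j')ᴴ := by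
      rw [← Meq s i j i' j']; simp [Matrix.conjTranspose_mul]
    calc (Bmat i j)ᴴ * Bmat i j * ((Amat s i' j')ᴴ * Amat s i' j' * ((Bmat i j)ᴴ * Bmat i j))
        = (Bmat i j)ᴴ * ((Bmat i j * (Amat s i' j')ᴴ) * (Amat s i' j' * (Bmat i j)ᴴ)) *
            Bmat i j := by simp only [Matrix.mul_assoc]
      _ = (Bmat i j)ᴴ * ((Mmat s i j i' j')ᴴ * Mmat s i j i' j') * Bmat i j := by
            rw [hBA, Meq]
      _ = (Bmat i j)ᴴ * ((4⁻¹ : ℂ) • (1 : Matrix (Fin 2) (Fin 2) ℂ)) * Bmat i j := by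
            rw [_root_.gram]
      _ = (4⁻¹ : ℂ) • ((Bmat i j)ᴴ * Bmat i j) := by
            simp [Matrix.mul_smul, Matrix.smul_mul]
  have hT0 : T ≠ 0 := by
    intro h
    have h2 : T ((i, 0, 0) : Fin 2 × Fin 2 × Fin 2) (i, 0, 0) = 0 := by rw [h]; rfl
    simp [hT, Tproj] at h2
  set φ := Matrix.toEuclideanCLM (𝕜 := ℂ) (n := Fin 2 × Fin 2 × Fin 2) with hφ
  have opT_norm : ‖φ T‖ = 1 := by
    have h1 : star (φ T) * φ T = φ T := by
      rw [← map_star, ← _root_.map_mul, Matrix.star_eq_conjTranspose, hTh, hTi]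
    have h2 : ‖φ T‖ * ‖φ T‖ = ‖φ T‖ := by rw [← CStarRing.norm_star_mul_self, h1]
    have h3 : φ T ≠ 0 := by
      intro h
      apply hT0
      have h0 : φ T = φ 0 := by rw [h, map_zero]
      exact EquivLike.injective φ h0
    have h4 : ‖φ T‖ ≠ 0 := by simpa using h3
    exact mul_left_cancel₀ h4 (by rw [h2, mul_one])
  rw [matSqrt_proj hKh hKi, matSqrt_proj hTh hTi]
  have hsn : specNorm (K * T) = ‖φ (K * T)‖ := rfl
  rw [hsn]
  have hnn : ‖φ (K * T)‖ ^ 2 = ‖star (φ (K * T)) * φ (K * T)‖ := by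
    rw [sq, ← CStarRing.norm_star_mul_self]
  rw [hnn, ← map_star, ← _root_.map_mul]
  have hmat : star (K * T) * (K * T) = (4⁻¹ : ℂ) • T := by
    rw [Matrix.star_eq_conjTranspose, Matrix.conjTranspose_mul, hKh, hTh]
    calc T * K * (K * T) = T * (K * (K * T)) := by rw [Matrix.mul_assoc]
      _ = T * ((K * K) * T) := by rw [Matrix.mul_assoc]
      _ = T * (K * T) := by rw [hKi]
      _ = (4⁻¹ : ℂ) • T := hTKT
  rw [hmat]
  have e1 : φ ((4⁻¹ : ℂ) • T) = (4⁻¹ : ℂ) • φ T := map_smul φ _ _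
  rw [e1]
  have e2 : ‖(4⁻¹ : ℂ) • φ T‖ = ‖(4⁻¹ : ℂ)‖ * ‖φ T‖ := norm_smul (α := ℂ)
    (β := EuclideanSpace ℂ (Fin 2 × Fin 2 × Fin 2) →L[ℂ] EuclideanSpace ℂ (Fin 2 × Fin 2 × Fin 2))
    4⁻¹ (φ T)
  rw [e2, opT_norm]
  simp

/-- The overlap `c = max ‖√(K^{i'j'}_s) √(T^{ij})‖_∞²` equals `1/4`. -/
theorem stmt16 (s : Fin 2) :
    IsGreatest
      {c : ℝ | ∃ i j i' j' : Fin 2,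
        c = (specNorm (matSqrt (Kproj s i' j') * matSqrt (Tproj i j))) ^ 2}
      (1 / 4) := by
  constructor
  · exact ⟨0, 0, 0, 0, (key s 0 0 0 0).symm⟩
  · rintro c ⟨i, j, i', j', rfl⟩
    rw [key]
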